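/- Let c : ℤ × ℝ → ℝ be nowhere zero and differentiable in x, and define d(n) = −1/c(n−2). Then the pair (c, d) satisfies the coupled system ∂_x c(n) = c(n) c(n+1) d(n+1), ∂_x d(n) = −d(n) d(n−1) c(n−1) (for all n ∈ ℤ) if and only if c satisfies the single scalar equation ∂_x c(n) = −c(n) c(n+1)/c(n−1) for all n ∈ ℤ. Moreover, if in addition c(n)/c(n−2) > 0 for all n and the scalar equation holds, then q(n) = ln( c(n)/c(n−2) ) satisfies the Volterra equation ∂_x q(n) = −e^{q(n+1)} + e^{q(n−1)} for all n ∈ ℤ. -/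

import Mathlib

/-- The one-field reduction `d(n) = -1/c(n-2)` of the constrained D∆mKP(E)
x-flow: the coupled system collapses to a single scalar equation, whose
logarithmic variable solves the Volterra equation. -/
theorem dDmKPE_one_field_reduction
    (c : ℤ → ℝ → ℝ) (hc0 : ∀ n x, c n x ≠ 0)
    (hcd : ∀ n, Differentiable ℝ (c n)) :
    let d : ℤ → ℝ → ℝ := fun n x => -1 / c (n - 2) x
    let q : ℤ → ℝ → ℝ := fun n x => Real.log (c n x / c (n - 2) x)
    ((∀ n x, deriv (c n) x = c n x * c (n + 1) x * d (n + 1) x ∧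
        deriv (d n) x = -(d n x * d (n - 1) x * c (n - 1) x)) ↔
      (∀ n x, deriv (c n) x = -(c n x * c (n + 1) x / c (n - 1) x))) ∧
    ((∀ n x, c n x / c (n - 2) x > 0) →
      (∀ n x, deriv (c n) x = -(c n x * c (n + 1) x / c (n - 1) x)) →
      ∀ n x, HasDerivAt (q n)
        (-Real.exp (q (n + 1) x) + Real.exp (q (n - 1) x)) x) := by
  intro d q
  have hidx : ∀ n : ℤ, n + 1 - 2 = n - 1 := by intro n; ring
  have hidx2 : ∀ n : ℤ, n - 2 + 1 = n - 1 := by intro n; ring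
  have hidx3 : ∀ n : ℤ, n - 2 - 1 = n - 3 := by intro n; ring
  have hidx4 : ∀ n : ℤ, n - 1 - 2 = n - 3 := by intro n; ring
  constructor
  · constructor
    · intro h n x
      have h1 := (h n x).1
      simp only [d, hidx] at h1
      rw [h1]; field_simp
    · intro h n x
      refine ⟨?_, ?_⟩
      · simp only [d, hidx]
        rw [h n x]; field_simp
      · -- compute deriv (d n) x
        have hD : HasDerivAt (d n)
            (deriv (c (n - 2)) x / (c (n - 2) x) ^ 2) x := by
          have h1 : HasDerivAt (c (n - 2)) (deriv (c (n - 2)) x) x :=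
            ((hcd (n - 2)) x).hasDerivAt
          have h2 := (h1.inv (hc0 (n - 2) x)).neg
          have : d n = fun y => -(c (n - 2) y)⁻¹ := by
            funext y; simp [d]; ring
          rw [this]
          exact h2.congr_deriv (by ring)
        rw [hD.deriv, h (n - 2) x]
        simp only [d, hidx2, hidx3, hidx4]
        have a1 := hc0 (n - 2) x; have a2 := hc0 (n - 3) x; have a3 := hc0 (n - 1) x
        field_simp
  · intro hpos h n x
    have hq : ∀ m, q m = fun y => Real.log (c m y) - Real.log (c (m - 2) y) := by
      intro m; funext y
      simp only [q]
      rw [Real.log_div (hc0 m y) (hc0 (m - 2) y)]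
    have hder : ∀ m, HasDerivAt (q m)
        (deriv (c m) x / c m x - deriv (c (m - 2)) x / c (m - 2) x) x := by
      intro m
      rw [hq m]
      exact (((hcd m) x).hasDerivAt.log (hc0 m x)).sub
        (((hcd (m - 2)) x).hasDerivAt.log (hc0 (m - 2) x))
    have key := hder n
    have hval : deriv (c n) x / c n x - deriv (c (n - 2)) x / c (n - 2) x
        = -Real.exp (q (n + 1) x) + Real.exp (q (n - 1) x) := by
      have e1 : Real.exp (q (n + 1) x) = c (n + 1) x / c (n - 1) x := by
        simp only [q, hidx]
        exact Real.exp_log (by simpa [hidx] using hpos (n + 1) x)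
      have e2 : Real.exp (q (n - 1) x) = c (n - 1) x / c (n - 3) x := by
        simp only [q, hidx4]
        exact Real.exp_log (by simpa [hidx4] using hpos (n - 1) x)
      rw [e1, e2, h n x, h (n - 2) x]
      simp only [hidx2, hidx3]
      have a0 := hc0 n x; have a1 := hc0 (n - 2) x; have a2 := hc0 (n - 3) x
      have a3 := hc0 (n - 1) x; have a4 := hc0 (n + 1) x
      field_simp
      ring
    rw [hval] at key
    exact key
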